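/- Let D^- be a negative digraph (all arcs signed −1) with non-negative girth γ^+ (necessarily γ^+ is even, being the minimum length of an even cycle). For any f ∈ F(D^-, s) and any two distinct fixed points x, y of f, min(L(x,y), L(y,x)) ≥ γ^+/2. -/

import Mathlib

/-- `f ∈ F(D⁻,s)` for a negative digraph with arc relation `A` (`A j i` means an
arc from `j` to `i`, signed `−1`): each `f_i` is monotone w.r.t.
`x ≤ᵢ y ⟺ x_j ≥ y_j` for all in-neighbours `j` of `i`. -/
def memFneg {n s : ℕ} (A : Fin n → Fin n → Prop)
    (f : (Fin n → Fin s) → Fin n → Fin s) : Prop :=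
  ∀ (i : Fin n) (x y : Fin n → Fin s), (∀ j, A j i → y j ≤ x j) → f x i ≤ f y i

/-- `L(x,y) = |{i : x_i < y_i}|`. -/
def Lcnt {n s : ℕ} (x y : Fin n → Fin s) : ℕ :=
  (Finset.univ.filter fun i => x i < y i).card

/-- for a negative digraph `D⁻` whose even (i.e. non-negative)
simple cycles all have length at least `γ⁺` (with `γ⁺` even), any two distinct
fixed points `x, y` of any `f ∈ F(D⁻,s)` satisfy `min(L(x,y), L(y,x)) ≥ γ⁺/2`. -/
theorem stmt12 (n s γ : ℕ) (hs : 2 ≤ s) (hγe : Even γ)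
    (A : Fin n → Fin n → Prop)
    (hγ : ∀ (k : ℕ) (v : ℕ → Fin n), 0 < k → Even k → (∀ t, v (t + k) = v t) →
      (∀ t, A (v t) (v (t + 1))) →
      (∀ t1 t2, t1 < k → t2 < k → v t1 = v t2 → t1 = t2) → γ ≤ k) :
    ∀ f : (Fin n → Fin s) → Fin n → Fin s, memFneg A f →
      ∀ x y : Fin n → Fin s, f x = x → f y = y → x ≠ y →
        γ / 2 ≤ min (Lcnt x y) (Lcnt y x) := by
  intro f hf x y hfx hfy hxy
  classical
  -- Step lemmas: a strictly smaller / larger coordinate has an in-neighbour of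
  -- the opposite kind.
  have hstepP : ∀ i : Fin n, x i < y i → ∃ j, A j i ∧ y j < x j := by
    intro i hi
    by_contra hc
    push_neg at hc
    have h2 := hf i y x hc
    rw [hfx, hfy] at h2
    exact absurd hi (not_lt.mpr h2)
  have hstepN : ∀ i : Fin n, y i < x i → ∃ j, A j i ∧ x j < y j := by
    intro i hi
    by_contra hc
    push_neg at hc
    have h2 := hf i x y hc
    rw [hfx, hfy] at h2
    exact absurd hi (not_lt.mpr h2)
  -- there is a coordinate with x < y
  have hexP : ∃ i, x i < y i := by
    have hne : ∃ i, x i ≠ y i := by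
      by_contra h
      push_neg at h
      exact hxy (funext h)
    obtain ⟨i0, h0⟩ := hne
    rcases h0.lt_or_gt with h | h
    · exact ⟨i0, h⟩
    · obtain ⟨j, _, hj⟩ := hstepN i0 h
      exact ⟨j, hj⟩
  obtain ⟨i0, hi0⟩ := hexP
  -- a step function
  have hstep : ∀ j : Fin n, ∃ j', (x j < y j → A j' j ∧ y j' < x j') ∧
      (y j < x j → A j' j ∧ x j' < y j') := by
    intro j
    by_cases h : x j < y j
    · obtain ⟨j', hj'⟩ := hstepP j h
      exact ⟨j', fun _ => hj', fun h' => absurd h' (asymm h)⟩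
    · by_cases h' : y j < x j
      · obtain ⟨j', hj'⟩ := hstepN j h'
        exact ⟨j', fun hc => absurd hc h, fun _ => hj'⟩
      · exact ⟨j, fun hc => absurd hc h, fun hc => absurd hc h'⟩
  choose g hg1 hg2 using hstep
  set v : ℕ → Fin n := fun t => g^[t] i0 with hvdef
  have hvs : ∀ t, v (t + 1) = g (v t) := by
    intro t
    simp only [hvdef]
    exact Function.iterate_succ_apply' g t i0
  -- alternation invariant
  have hv : ∀ t, (t % 2 = 0 → x (v t) < y (v t)) ∧ (t % 2 = 1 → y (v t) < x (v t)) := by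
    intro t
    induction t with
    | zero => exact ⟨fun _ => hi0, fun h => by omega⟩
    | succ t ih =>
      rcases Nat.mod_two_eq_zero_or_one t with h | h
      · refine ⟨fun h' => by omega, fun _ => ?_⟩
        rw [hvs]
        exact (hg1 (v t) (ih.1 h)).2
      · refine ⟨fun _ => ?_, fun h' => by omega⟩
        rw [hvs]
        exact (hg2 (v t) (ih.2 h)).2
  have harc : ∀ t, A (v (t + 1)) (v t) := by
    intro t
    rcases Nat.mod_two_eq_zero_or_one t with h | h
    · rw [hvs]; exact (hg1 (v t) ((hv t).1 h)).1
    · rw [hvs]; exact (hg2 (v t) ((hv t).2 h)).1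
  -- pigeonhole: a repeat in v
  have hrep : ∃ t2, ∃ t1, t1 < t2 ∧ v t1 = v t2 := by
    obtain ⟨a, b, hab, heq⟩ := Fintype.exists_ne_map_eq_of_card_lt
      (fun t : Fin (n + 1) => v t) (by simp)
    rcases hab.lt_or_gt with h | h
    · exact ⟨b, a, h, heq⟩
    · exact ⟨a, b, h, heq.symm⟩
  set t2 := Nat.find hrep with ht2def
  obtain ⟨t1, ht12, hvv⟩ := Nat.find_spec hrep
  have hmin : ∀ a b, a < b → b < t2 → v a ≠ v b := by
    intro a b hab hb heq
    exact Nat.find_min hrep hb ⟨a, hab, heq⟩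
  set k := t2 - t1 with hkdef
  have hk : 0 < k := by omega
  have hkt : t1 + k = t2 := by omega
  have vinj : ∀ a b, t1 ≤ a → a < t2 → t1 ≤ b → b < t2 → v a = v b → a = b := by
    intro a b ha ha2 hb hb2 heq
    rcases lt_trichotomy a b with h | h | h
    · exact absurd heq (hmin a b h hb2)
    · exact h
    · exact absurd heq.symm (hmin b a h ha2)
  -- k is even
  have hke : Even k := by
    rw [Nat.even_iff]
    by_contra hodd
    have hodd' : k % 2 = 1 := by omega
    rcases Nat.mod_two_eq_zero_or_one t1 with h | h
    · have h2 : t2 % 2 = 1 := by omega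
      have a1 := (hv t1).1 h
      have a2 := (hv t2).2 h2
      rw [hvv] at a1
      exact absurd a1 (asymm a2)
    · have h2 : t2 % 2 = 0 := by omega
      have a1 := (hv t1).2 h
      have a2 := (hv t2).1 h2
      rw [hvv] at a1
      exact absurd a1 (asymm a2)
  -- successor of mod
  have hms : ∀ a : ℕ, (a + 1) % k = if a % k + 1 = k then 0 else a % k + 1 := by
    intro a
    have h0 : a % k < k := Nat.mod_lt _ hk
    rcases eq_or_lt_of_le (show 1 ≤ k from hk) with h1 | h1
    · have hk1 : k = 1 := h1.symm
      simp [hk1, Nat.mod_one]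
    · have h1' : (a + 1) % k = (a % k + 1) % k := by
        conv_lhs => rw [Nat.add_mod]
        rw [Nat.mod_eq_of_lt h1]
      rw [h1']
      split_ifs with h
      · rw [h, Nat.mod_self]
      · exact Nat.mod_eq_of_lt (by omega)
  -- wrap-around step for v on the cycle
  have hu : ∀ a : ℕ, v (t1 + (a + 1) % k) = v (t1 + a % k + 1) := by
    intro a
    rw [hms a]
    split_ifs with h
    · have e1 : t1 + 0 = t1 := by omega
      have e2 : t1 + a % k + 1 = t2 := by omega
      rw [e1, e2, hvv]
    · rw [← Nat.add_assoc]
  -- the reversed cycle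
  have hγk : γ ≤ k := by
    apply hγ k (fun t => v (t1 + (k - t % k) % k)) hk hke
    · intro t
      simp only [Nat.add_mod_right]
    · intro t
      have hrk : t % k < k := Nat.mod_lt _ hk
      set b := (k - (t + 1) % k) % k with hb
      have hbk : b < k := Nat.mod_lt _ hk
      have hw0 : v (t1 + (k - t % k) % k) = v (t1 + b + 1) := by
        have h2 : (k - t % k) % k = (b + 1) % k := by
          rw [hms t] at hb
          split_ifs at hb with h
          · have hb0 : b = 0 := by rw [hb]; simp [Nat.mod_self]
            rw [hb0]
            congr 1
            omega
          · have hb' : b = k - t % k - 1 := by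
              rw [hb, Nat.mod_eq_of_lt (by omega)]
              omega
            have he : b + 1 = k - t % k := by omega
            rw [he]
        rw [h2, hu b, Nat.mod_eq_of_lt hbk]
      rw [hw0]
      exact harc (t1 + b)
    · intro a b ha hb heq
      have h1 : ∀ c, c < k → (k - c % k) % k = if c = 0 then 0 else k - c := by
        intro c hc
        rw [Nat.mod_eq_of_lt hc]
        split_ifs with h
        · simp [h]
        · exact Nat.mod_eq_of_lt (by omega)
      rw [h1 a ha, h1 b hb] at heq
      have hXa : (if a = 0 then 0 else k - a) < k := by split_ifs <;> omega
      have hXb : (if b = 0 then 0 else k - b) < k := by split_ifs <;> omega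
      have := vinj _ _ (by omega) (by omega) (by omega) (by omega) heq
      split_ifs at this <;> omega
  -- cardinality bounds
  obtain ⟨m, hm⟩ := hke
  have hcard : ∀ c : ℕ, c ≤ 1 →
      ∀ S : Finset (Fin n), (∀ j, j < m → v (t1 + c + 2 * j) ∈ S) → m ≤ S.card := by
    intro c hc S hS
    have := Finset.card_le_card_of_injOn (f := fun j => v (t1 + c + 2 * j))
      (s := Finset.range m) (t := S)
      (fun j hj => hS j (Finset.mem_range.mp hj))
      (by
        intro j1 hj1 j2 hj2 heq
        simp only [Finset.coe_range, Set.mem_Iio] at hj1 hj2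
        have := vinj _ _ (by omega) (by omega) (by omega) (by omega) heq
        omega)
    simpa using this
  have hPc : m ≤ Lcnt x y := by
    obtain ⟨c, hc1, hc2⟩ : ∃ c, c ≤ 1 ∧ (t1 + c) % 2 = 0 := by
      rcases Nat.mod_two_eq_zero_or_one t1 with h | h
      · exact ⟨0, by omega, by omega⟩
      · exact ⟨1, le_refl 1, by omega⟩
    apply hcard c hc1
    intro j hj
    simp only [Finset.mem_filter, Finset.mem_univ, true_and]
    exact (hv (t1 + c + 2 * j)).1 (by omega)
  have hNc : m ≤ Lcnt y x := by
    obtain ⟨c, hc1, hc2⟩ : ∃ c, c ≤ 1 ∧ (t1 + c) % 2 = 1 := by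
      rcases Nat.mod_two_eq_zero_or_one t1 with h | h
      · exact ⟨1, le_refl 1, by omega⟩
      · exact ⟨0, by omega, by omega⟩
    apply hcard c hc1
    intro j hj
    simp only [Finset.mem_filter, Finset.mem_univ, true_and]
    exact (hv (t1 + c + 2 * j)).2 (by omega)
  have hγ2 : γ / 2 ≤ m := by omega
  exact le_min (le_trans hγ2 hPc) (le_trans hγ2 hNc)
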